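/- Let G be a finite simple graph with independence number α and let g_j be the number of independent sets of size j in G. Set g = ∑_{j=1}^{α} (-1)^{j-1} g_j. Then the degree of the h-polynomial of R/I(G) equals α if and only if g ≠ 1. -/

import Mathlib

open Finset SimpleGraph

noncomputable def numIndep {V : Type*} [Fintype V] (G : SimpleGraph V) (i : ℕ) : ℕ :=
  Set.ncard {s : Finset V | s.card = i ∧ ∀ a ∈ s, ∀ b ∈ s, ¬ G.Adj a b}

noncomputable def indepNum {V : Type*} [Fintype V] (G : SimpleGraph V) : ℕ :=
  sSup {i | ∃ s : Finset V, s.card = i ∧ ∀ a ∈ s, ∀ b ∈ s, ¬ G.Adj a b}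

/-- The edge ideal of a finite simple graph on vertices `x_0, …, x_{n-1}`. -/
noncomputable def edgeIdeal (k : Type*) [Field k] {n : ℕ} (G : SimpleGraph (Fin n)) :
    Ideal (MvPolynomial (Fin n) k) :=
  Ideal.span {p | ∃ i j, G.Adj i j ∧ p = MvPolynomial.X i * MvPolynomial.X j}

/-- The Hilbert function of `R/I(G)`: the `k`-dimension of the degree-`d` graded piece. -/
noncomputable def hilbertFunction (k : Type*) [Field k] {n : ℕ} (G : SimpleGraph (Fin n))
    (d : ℕ) : ℕ :=
  Module.finrank k (Submodule.map (Ideal.Quotient.mkₐ k (edgeIdeal k G)).toLinearMap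
    (MvPolynomial.homogeneousSubmodule (Fin n) k d))

/-- The Hilbert series of `R/I(G)`, as a power series with rational coefficients. -/
noncomputable def hilbertSeries (k : Type*) [Field k] {n : ℕ} (G : SimpleGraph (Fin n)) :
    PowerSeries ℚ :=
  PowerSeries.mk fun d => (hilbertFunction k G d : ℚ)


namespace ST14
open scoped Classical

variable {n : ℕ} (G : SimpleGraph (Fin n))

/-- independence predicate -/
def Ind (s : Finset (Fin n)) : Prop := ∀ a ∈ s, ∀ b ∈ s, ¬ G.Adj a b

noncomputable def indepFinsets : Finset (Finset (Fin n)) := Finset.univ.filter (Ind G)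

noncomputable def gI (i : ℕ) : ℕ := (Finset.univ.filter (fun S : Finset (Fin n) => S.card = i ∧ Ind G S)).card

noncomputable def F (d : ℕ) : Finset (Fin n →₀ ℕ) :=
  (Finset.finsuppAntidiag Finset.univ d).filter (fun f => Ind G f.support)

lemma deg_univ (f : Fin n →₀ ℕ) : f.degree = Finset.univ.sum f := by
  rw [Finsupp.degree]
  exact Finset.sum_subset (Finset.subset_univ _)
    (fun i _ hi => Finsupp.notMem_support_iff.mp hi)

lemma mem_F {d : ℕ} {f : Fin n →₀ ℕ} :
    f ∈ F G d ↔ f.degree = d ∧ Ind G f.support := by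
  simp only [F, Finset.mem_filter, Finset.mem_finsuppAntidiag, and_congr_left_iff]
  intro _
  rw [deg_univ]
  simp [Finset.subset_univ]


open PowerSeries in
lemma one_sub_X_mul_geom : ((1 : PowerSeries ℚ) - PowerSeries.X) * PowerSeries.mk (fun _ => (1:ℚ)) = 1 := by
  ext d
  rw [sub_mul, one_mul, map_sub, coeff_mk]
  rcases d with _ | d
  · simp
  · simp [PowerSeries.coeff_succ_X_mul, PowerSeries.coeff_mk]

/-- generating function for finsupps with support in S -/
noncomputable def GS (S : Finset (Fin n)) : PowerSeries ℚ :=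
  PowerSeries.mk (fun d => ((Finset.finsuppAntidiag S d).card : ℚ))

lemma GS_eq_prod (S : Finset (Fin n)) :
    GS S = ∏ _i ∈ S, PowerSeries.mk (fun _ => (1:ℚ)) := by
  ext d
  rw [GS, PowerSeries.coeff_mk, PowerSeries.coeff_prod]
  simp

lemma one_sub_X_pow_mul_GS (S : Finset (Fin n)) :
    ((1 : PowerSeries ℚ) - PowerSeries.X) ^ S.card * GS S = 1 := by
  rw [GS_eq_prod, ← Finset.prod_const, ← Finset.prod_mul_distrib]
  simp [one_sub_X_mul_geom]

noncomputable def oneS (S : Finset (Fin n)) : Fin n →₀ ℕ := Finsupp.indicator S (fun _ _ => 1)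

lemma oneS_apply {S : Finset (Fin n)} {i : Fin n} : oneS S i = if i ∈ S then 1 else 0 := by
  simp [oneS, Finsupp.indicator_apply]

lemma support_oneS (S : Finset (Fin n)) : (oneS S).support = S := by
  ext i
  rw [Finsupp.mem_support_iff, oneS_apply]
  split <;> simp_all

lemma sum_oneS (S : Finset (Fin n)) : S.sum (oneS S) = S.card := by
  rw [Finset.card_eq_sum_ones]
  exact Finset.sum_congr rfl (fun i hi => by simp [oneS_apply, hi])

lemma card_exact (S : Finset (Fin n)) (d : ℕ) :
    ((Finset.finsuppAntidiag S d).filter (fun f => f.support = S)).card =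
      if S.card ≤ d then (Finset.finsuppAntidiag S (d - S.card)).card else 0 := by
  split_ifs with hle
  · symm
    apply Finset.card_nbij' (i := fun f => f + oneS S) (j := fun g => g - oneS S)
    · intro f hf
      rw [Finset.mem_coe, Finset.mem_finsuppAntidiag] at hf
      have hsupp : (f + oneS S).support = S := by
        ext i
        simp only [Finsupp.mem_support_iff, Finsupp.add_apply, oneS_apply]
        constructor
        · intro hne
          by_contra hi
          have h1 : f i = 0 := Finsupp.notMem_support_iff.mp (fun hm => hi (hf.2 hm))
          simp [h1, hi] at hne
        · intro hi; simp [hi]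
      rw [Finset.mem_coe, Finset.mem_filter, Finset.mem_finsuppAntidiag]
      refine ⟨⟨?_, hsupp.le⟩, hsupp⟩
      have : S.sum (f + oneS S) = S.sum f + S.sum (oneS S) := by
        simp only [Finsupp.coe_add, Pi.add_apply, Finset.sum_add_distrib]
      rw [this, hf.1, sum_oneS]
      omega
    · intro g hg
      rw [Finset.mem_coe, Finset.mem_filter, Finset.mem_finsuppAntidiag] at hg
      rw [Finset.mem_coe, Finset.mem_finsuppAntidiag]
      have hle2 : oneS S ≤ g := by
        intro i
        rcases Finset.decidableMem i S with hi | hi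
        · simp [oneS_apply, hi]
        · simp only [oneS_apply, if_pos hi]
          have : i ∈ g.support := hg.2 ▸ hi
          rw [Finsupp.mem_support_iff] at this
          omega
      constructor
      · have hsum : S.sum ((g - oneS S) + oneS S) = S.sum (g - oneS S) + S.sum (oneS S) := by
          simp only [Finsupp.coe_add, Pi.add_apply, Finset.sum_add_distrib]
        rw [tsub_add_cancel_of_le hle2] at hsum
        rw [hg.1.1, sum_oneS] at hsum
        beta_reduce
        omega
      · intro i hi
        rw [Finsupp.mem_support_iff] at hi
        have : g i ≠ 0 := fun h0 => hi (by simp [Finsupp.tsub_apply, h0])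
        exact hg.1.2 (Finsupp.mem_support_iff.mpr this)
    · intro f _
      simp [add_tsub_cancel_right]
    · intro g hg
      rw [Finset.mem_coe, Finset.mem_filter] at hg
      have hle2 : oneS S ≤ g := by
        intro i
        rcases Finset.decidableMem i S with hi | hi
        · simp [oneS_apply, hi]
        · simp only [oneS_apply, if_pos hi]
          have : i ∈ g.support := hg.2 ▸ hi
          rw [Finsupp.mem_support_iff] at this
          omega
      exact tsub_add_cancel_of_le hle2
  · apply Finset.card_eq_zero.mpr
    rw [Finset.filter_eq_empty_iff]
    intro f hf
    rw [Finset.mem_finsuppAntidiag] at hf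
    intro hsupp
    apply hle
    calc S.card = S.sum (oneS S) := (sum_oneS S).symm
    _ ≤ S.sum f := Finset.sum_le_sum (fun i hi => by
        have : i ∈ f.support := hsupp ▸ hi
        rw [Finsupp.mem_support_iff] at this
        simp [oneS_apply, hi]; omega)
    _ = d := hf.1

lemma mem_indepFinsets {S : Finset (Fin n)} : S ∈ indepFinsets G ↔ Ind G S := by
  simp [indepFinsets]

noncomputable def cser : PowerSeries ℚ := PowerSeries.mk (fun d => ((F G d).card : ℚ))

lemma cser_eq : cser G = ∑ S ∈ indepFinsets G, PowerSeries.X ^ S.card * GS S := by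
  ext d
  rw [cser, PowerSeries.coeff_mk, map_sum]
  have hcoeff : ∀ S ∈ indepFinsets G,
      (PowerSeries.coeff d) (PowerSeries.X ^ S.card * GS S) =
        (((F G d).filter (fun f => f.support = S)).card : ℚ) := by
    intro S hS
    rw [PowerSeries.coeff_X_pow_mul']
    have hfib : (F G d).filter (fun f => f.support = S) =
        (Finset.finsuppAntidiag S d).filter (fun f => f.support = S) := by
      ext f
      simp only [Finset.mem_filter, mem_F, Finset.mem_finsuppAntidiag, and_congr_left_iff]
      intro hsupp
      subst hsupp
      constructor
      · rintro ⟨hdeg, -⟩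
        exact ⟨by rw [← hdeg, Finsupp.degree_apply], Finset.Subset.refl _⟩
      · rintro ⟨hsum, -⟩
        exact ⟨by rw [← hsum, Finsupp.degree_apply], (mem_indepFinsets G).mp hS⟩
    rw [hfib, card_exact]
    split_ifs with hle
    · rw [GS, PowerSeries.coeff_mk]
    · simp
  rw [Finset.sum_congr rfl hcoeff, ← Nat.cast_sum]
  congr 1
  refine (Finset.card_eq_sum_card_fiberwise (f := fun f : Fin n →₀ ℕ => f.support)
    (fun f hf => ?_))
  rw [Finset.mem_coe, mem_indepFinsets]
  exact ((mem_F G).mp hf).2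

lemma card_le_n (S : Finset (Fin n)) : S.card ≤ n := by
  simpa using Finset.card_le_card (Finset.subset_univ S)

noncomputable def Qp : Polynomial ℚ :=
  ∑ S ∈ indepFinsets G, Polynomial.X ^ S.card * (1 - Polynomial.X) ^ (n - S.card)

lemma key : ((Qp G : Polynomial ℚ) : PowerSeries ℚ) = (1 - PowerSeries.X) ^ n * cser G := by
  rw [cser_eq, Finset.mul_sum, Qp, ← Polynomial.coeToPowerSeries.ringHom_apply, map_sum]
  refine Finset.sum_congr rfl (fun S hS => ?_)
  simp only [map_mul, map_pow, map_sub, map_one, Polynomial.coeToPowerSeries.ringHom_apply,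
    Polynomial.coe_X]
  have hcard : S.card ≤ n := card_le_n S
  calc (PowerSeries.X : PowerSeries ℚ) ^ S.card * (1 - PowerSeries.X) ^ (n - S.card)
      = PowerSeries.X ^ S.card * (1 - PowerSeries.X) ^ (n - S.card) *
        ((1 - PowerSeries.X) ^ S.card * GS S) := by
        rw [one_sub_X_pow_mul_GS, mul_one]
    _ = (1 - PowerSeries.X) ^ ((n - S.card) + S.card) * (PowerSeries.X ^ S.card * GS S) := by
        rw [pow_add]; ring
    _ = (1 - PowerSeries.X) ^ n * (PowerSeries.X ^ S.card * GS S) := by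
        rw [Nat.sub_add_cancel hcard]

/-- exponents of edge monomials -/
def ES : Set (Fin n →₀ ℕ) :=
  {e | ∃ i j, G.Adj i j ∧ e = Finsupp.single i 1 + Finsupp.single j 1}

lemma edgeIdeal_eq (k : Type*) [Field k] :
    edgeIdeal k G = Ideal.span ((fun s => MvPolynomial.monomial s (1:k)) '' ES G) := by
  unfold edgeIdeal
  congr 1
  ext p
  constructor
  · rintro ⟨i, j, hij, rfl⟩
    exact ⟨Finsupp.single i 1 + Finsupp.single j 1, ⟨i, j, hij, rfl⟩,
      by simp [MvPolynomial.X, MvPolynomial.monomial_mul]⟩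
  · rintro ⟨e, ⟨i, j, hij, rfl⟩, rfl⟩
    exact ⟨i, j, hij, by simp [MvPolynomial.X, MvPolynomial.monomial_mul]⟩

lemma mem_edgeIdeal_iff (k : Type*) [Field k] {p : MvPolynomial (Fin n) k} :
    p ∈ edgeIdeal k G ↔ ∀ m ∈ p.support, ∃ e ∈ ES G, e ≤ m := by
  rw [edgeIdeal_eq, MvPolynomial.mem_ideal_span_monomial_image]

lemma le_of_mem_ES {e m : Fin n →₀ ℕ} (he : e ∈ ES G) (hle : e ≤ m) :
    ¬ Ind G m.support := by
  obtain ⟨i, j, hij, rfl⟩ := he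
  intro hind
  have hne : i ≠ j := G.ne_of_adj hij
  have hi : i ∈ m.support := by
    rw [Finsupp.mem_support_iff]
    have := hle i
    simp [Finsupp.single_apply, hne] at this
    omega
  have hj : j ∈ m.support := by
    rw [Finsupp.mem_support_iff]
    have := hle j
    simp [Finsupp.single_apply, hne, hne.symm] at this
    omega
  exact hind i hi j hj hij

lemma monomial_mem_edgeIdeal (k : Type*) [Field k] {m : Fin n →₀ ℕ}
    (hm : ¬ Ind G m.support) : MvPolynomial.monomial m (1:k) ∈ edgeIdeal k G := by
  rw [mem_edgeIdeal_iff]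
  intro ν hν
  rw [MvPolynomial.support_monomial, if_neg (one_ne_zero)] at hν
  rw [Finset.mem_singleton] at hν
  subst hν
  by_contra hcon
  push_neg at hcon
  apply hm
  intro a ha b hb hadj
  have hne : a ≠ b := G.ne_of_adj hadj
  refine hcon (Finsupp.single a 1 + Finsupp.single b 1) ⟨a, b, hadj, rfl⟩ ?_
  intro x
  rw [Finsupp.mem_support_iff] at ha hb
  rcases eq_or_ne x a with rfl | hxa
  · simp [Finsupp.add_apply, Finsupp.single_apply, hne, Ne.symm hne]; omega
  rcases eq_or_ne x b with rfl | hxb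
  · simp [Finsupp.add_apply, Finsupp.single_apply, hne, Ne.symm hne, hxa, Ne.symm hxa]; omega
  · simp [Finsupp.add_apply, Finsupp.single_apply, Ne.symm hxa, Ne.symm hxb]

lemma hilbert_eq (k : Type*) [Field k] (d : ℕ) :
    hilbertFunction k G d = (F G d).card := by
  classical
  set q := (Ideal.Quotient.mkₐ k (edgeIdeal k G)).toLinearMap with hq
  have hq0 : ∀ p : MvPolynomial (Fin n) k, q p = 0 ↔ p ∈ edgeIdeal k G := by
    intro p
    exact Ideal.Quotient.eq_zero_iff_mem
  set v : {f // f ∈ F G d} → (MvPolynomial (Fin n) k ⧸ edgeIdeal k G) :=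
    fun μ => q (MvPolynomial.monomial (μ : Fin n →₀ ℕ) (1:k)) with hv
  have hdeg : ∀ μ : {f // f ∈ F G d}, Finsupp.degree (μ : Fin n →₀ ℕ) = d :=
    fun μ => ((mem_F G).mp μ.2).1
  have hind : ∀ μ : {f // f ∈ F G d}, Ind G (μ : Fin n →₀ ℕ).support :=
    fun μ => ((mem_F G).mp μ.2).2
  have hli : LinearIndependent k v := by
    rw [Fintype.linearIndependent_iff]
    intro c hc j
    set p : MvPolynomial (Fin n) k :=
      ∑ i : {f // f ∈ F G d}, c i • MvPolynomial.monomial (i : Fin n →₀ ℕ) (1:k) with hp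
    have hqp : q p = 0 := by
      rw [hp, map_sum]
      simpa only [map_smul] using hc
    have hpI : p ∈ edgeIdeal k G := (hq0 p).mp hqp
    by_contra hcj
    have hcoeff : MvPolynomial.coeff (j : Fin n →₀ ℕ) p = c j := by
      rw [hp, MvPolynomial.coeff_sum]
      rw [Finset.sum_eq_single j]
      · simp [MvPolynomial.coeff_monomial]
      · intro i _ hij
        have : (i : Fin n →₀ ℕ) ≠ (j : Fin n →₀ ℕ) := fun h => hij (Subtype.ext h)
        simp [MvPolynomial.coeff_smul, MvPolynomial.coeff_monomial, this]
      · simp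
    have hmem : (j : Fin n →₀ ℕ) ∈ p.support := by
      rw [MvPolynomial.mem_support_iff, hcoeff]; exact hcj
    obtain ⟨e, he, hle⟩ := (mem_edgeIdeal_iff G k).mp hpI _ hmem
    exact le_of_mem_ES G he hle (hind j)
  have hspan : Submodule.map q (MvPolynomial.homogeneousSubmodule (Fin n) k d) =
      Submodule.span k (Set.range v) := by
    apply le_antisymm
    · rintro x ⟨p, hp, rfl⟩
      rw [SetLike.mem_coe, MvPolynomial.mem_homogeneousSubmodule] at hp
      have hrw : q p = ∑ ν ∈ p.support, q (MvPolynomial.monomial ν (MvPolynomial.coeff ν p)) := by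
        rw [← map_sum, MvPolynomial.support_sum_monomial_coeff]
      rw [hrw]
      apply Submodule.sum_mem
      intro ν hν
      have hdegν : Finsupp.degree ν = d := by
        rw [Finsupp.degree_eq_weight_one]
        exact hp (MvPolynomial.mem_support_iff.mp hν)
      have : MvPolynomial.monomial ν (MvPolynomial.coeff ν p) =
          MvPolynomial.coeff ν p • MvPolynomial.monomial ν (1:k) := by
        rw [MvPolynomial.smul_monomial, smul_eq_mul, mul_one]
      rw [this, map_smul]
      by_cases hI : Ind G ν.support
      · have hνF : ν ∈ F G d := (mem_F G).mpr ⟨hdegν, hI⟩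
        exact Submodule.smul_mem _ _ (Submodule.subset_span ⟨⟨ν, hνF⟩, rfl⟩)
      · have : q (MvPolynomial.monomial ν (1:k)) = 0 :=
          (hq0 _).mpr (monomial_mem_edgeIdeal G k hI)
        rw [this, smul_zero]
        exact Submodule.zero_mem _
    · rw [Submodule.span_le]
      rintro x ⟨μ, rfl⟩
      exact ⟨MvPolynomial.monomial (μ : Fin n →₀ ℕ) (1:k),
        (MvPolynomial.mem_homogeneousSubmodule _ _).mpr
          (MvPolynomial.isHomogeneous_monomial _ (hdeg μ)), rfl⟩
  rw [hilbertFunction, ← hq, hspan, finrank_span_eq_card hli, Fintype.card_coe]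

lemma bddAbove_indepSet : BddAbove {i | ∃ s : Finset (Fin n), s.card = i ∧ Ind G s} :=
  ⟨n, fun _ ⟨s, hs, _⟩ => hs ▸ card_le_n s⟩

lemma indepSet_def : {i | ∃ s : Finset (Fin n), s.card = i ∧
    ∀ a ∈ s, ∀ b ∈ s, ¬ G.Adj a b} = {i | ∃ s : Finset (Fin n), s.card = i ∧ Ind G s} := rfl

lemma card_le_indepNum {S : Finset (Fin n)} (hS : Ind G S) : S.card ≤ _root_.indepNum G := by
  rw [_root_.indepNum, indepSet_def]
  exact le_csSup (bddAbove_indepSet G) ⟨S, rfl, hS⟩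

lemma exists_indep_card : ∃ S : Finset (Fin n), Ind G S ∧ S.card = _root_.indepNum G := by
  have h0 : {i | ∃ s : Finset (Fin n), s.card = i ∧ Ind G s}.Nonempty :=
    ⟨0, ∅, Finset.card_empty, fun a ha => absurd ha (Finset.notMem_empty a)⟩
  have := Nat.sSup_mem h0 (bddAbove_indepSet G)
  rw [← indepSet_def] at this
  obtain ⟨S, hS, hind⟩ := this
  exact ⟨S, hind, hS⟩

lemma indepNum_le_n : _root_.indepNum G ≤ n := by
  obtain ⟨S, _, hS⟩ := exists_indep_card G
  exact hS ▸ card_le_n S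

lemma numIndep_eq (i : ℕ) : numIndep G i = gI G i := by
  rw [numIndep, gI]
  rw [show {s : Finset (Fin n) | s.card = i ∧ ∀ a ∈ s, ∀ b ∈ s, ¬ G.Adj a b} =
      ↑(Finset.univ.filter (fun S : Finset (Fin n) => S.card = i ∧ Ind G S)) by
    ext s; rw [Finset.coe_filter]; simp [Ind]]
  rw [Set.ncard_coe_finset]

lemma gI_zero : gI G 0 = 1 := by
  rw [gI]
  rw [show Finset.univ.filter (fun S : Finset (Fin n) => S.card = 0 ∧ Ind G S) = {∅} by
    ext S
    simp only [Finset.mem_filter, Finset.mem_univ, true_and, Finset.mem_singleton,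
      Finset.card_eq_zero]
    constructor
    · rintro ⟨rfl, -⟩; rfl
    · rintro rfl
      exact ⟨rfl, fun a ha => absurd ha (Finset.notMem_empty a)⟩]
  rfl

lemma gI_indepNum_ne_zero : gI G (_root_.indepNum G) ≠ 0 := by
  obtain ⟨S, hind, hcard⟩ := exists_indep_card G
  rw [gI]
  apply Finset.card_ne_zero_of_mem (a := S)
  simp [hcard, hind]

noncomputable def Pp : Polynomial ℚ :=
  ∑ i ∈ Finset.range (_root_.indepNum G + 1),
    Polynomial.C (gI G i : ℚ) * (Polynomial.X ^ i * (1 - Polynomial.X) ^ (_root_.indepNum G - i))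

lemma Qp_eq : Qp G = (1 - Polynomial.X) ^ (n - _root_.indepNum G) * Pp G := by
  have halpha := indepNum_le_n G
  rw [Qp, ← Finset.sum_fiberwise_of_maps_to (g := Finset.card)
      (t := Finset.range (_root_.indepNum G + 1))
      (fun S hS => Finset.mem_range.mpr
        (Nat.lt_succ_of_le (card_le_indepNum G ((mem_indepFinsets G).mp hS)))),
    Pp, Finset.mul_sum]
  refine Finset.sum_congr rfl (fun i hi => ?_)
  have hi' : i ≤ _root_.indepNum G := Nat.lt_succ_iff.mp (Finset.mem_range.mp hi)
  have hcard : ((indepFinsets G).filter (fun S => S.card = i)).card = gI G i := by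
    rw [gI]
    congr 1
    ext S
    simp only [indepFinsets, Finset.mem_filter, Finset.mem_univ, true_and]
    tauto
  rw [Finset.sum_congr rfl (fun S hS => by
      rw [(Finset.mem_filter.mp hS).2] :
    ∀ S ∈ (indepFinsets G).filter (fun S => S.card = i), (Polynomial.X ^ S.card *
      (1 - Polynomial.X) ^ (n - S.card) : Polynomial ℚ) =
      Polynomial.X ^ i * (1 - Polynomial.X) ^ (n - i))]
  rw [Finset.sum_const, hcard, nsmul_eq_mul, Polynomial.C_eq_natCast]
  have hsplit : n - i = (n - _root_.indepNum G) + (_root_.indepNum G - i) := by omega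
  rw [hsplit, pow_add]
  ring

lemma eval_Pp : (Pp G).eval 1 = (gI G (_root_.indepNum G) : ℚ) := by
  rw [Pp, Polynomial.eval_finset_sum]
  rw [Finset.sum_eq_single (_root_.indepNum G)]
  · simp
  · intro i hi hne
    have : 0 < _root_.indepNum G - i := by
      have := Nat.lt_succ_iff.mp (Finset.mem_range.mp hi)
      omega
    simp only [Polynomial.eval_mul, Polynomial.eval_pow, Polynomial.eval_sub,
      Polynomial.eval_one, Polynomial.eval_X, sub_self]
    rw [zero_pow (by omega)]
    ring
  · intro hmem
    exact absurd (Finset.self_mem_range_succ (_root_.indepNum G)) hmem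

lemma natDegree_Pp_le : (Pp G).natDegree ≤ _root_.indepNum G := by
  rw [Pp]
  apply Polynomial.natDegree_sum_le_of_forall_le
  intro i hi
  have hi' : i ≤ _root_.indepNum G := Nat.lt_succ_iff.mp (Finset.mem_range.mp hi)
  calc (Polynomial.C (gI G i : ℚ) * (Polynomial.X ^ i *
        (1 - Polynomial.X) ^ (_root_.indepNum G - i))).natDegree
      ≤ (Polynomial.C (gI G i : ℚ)).natDegree +
        (Polynomial.X ^ i * (1 - Polynomial.X) ^ (_root_.indepNum G - i) :
          Polynomial ℚ).natDegree := Polynomial.natDegree_mul_le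
    _ ≤ 0 + ((Polynomial.X ^ i : Polynomial ℚ).natDegree +
        ((1 - Polynomial.X : Polynomial ℚ) ^ (_root_.indepNum G - i)).natDegree) := by
        gcongr
        · exact le_of_eq (Polynomial.natDegree_C _)
        · exact Polynomial.natDegree_mul_le
    _ ≤ 0 + (i + (_root_.indepNum G - i)) := by
        gcongr
        · exact le_of_eq (Polynomial.natDegree_X_pow i)
        · refine le_trans (Polynomial.natDegree_pow_le) ?_
          have : (1 - Polynomial.X : Polynomial ℚ).natDegree ≤ 1 := by
            refine le_trans (Polynomial.natDegree_sub_le _ _) ?_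
            simp
          calc (_root_.indepNum G - i) * (1 - Polynomial.X : Polynomial ℚ).natDegree
              ≤ (_root_.indepNum G - i) * 1 := by gcongr
            _ = _root_.indepNum G - i := mul_one _
    _ ≤ _root_.indepNum G := by omega

lemma one_sub_X_pow_eq (m : ℕ) : (1 - Polynomial.X : Polynomial ℚ) ^ m
    = Polynomial.C ((-1)^m) * (Polynomial.X - Polynomial.C 1) ^ m := by
  rw [map_pow, map_neg, map_one, ← mul_pow]
  ring_nf

lemma coeff_one_sub_pow (m : ℕ) :
    ((1 - Polynomial.X : Polynomial ℚ) ^ m).coeff m = (-1)^m := by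
  rw [one_sub_X_pow_eq, Polynomial.coeff_C_mul]
  have hmonic : ((Polynomial.X - Polynomial.C (1:ℚ)) ^ m).Monic :=
    (Polynomial.monic_X_sub_C 1).pow m
  have hdeg : ((Polynomial.X - Polynomial.C (1:ℚ)) ^ m).natDegree = m := by
    rw [Polynomial.natDegree_pow, Polynomial.natDegree_X_sub_C, mul_one]
  have := hmonic.coeff_natDegree
  rw [hdeg] at this
  rw [this, mul_one]

lemma coeff_Pp : (Pp G).coeff (_root_.indepNum G)
    = ∑ i ∈ Finset.range (_root_.indepNum G + 1), (gI G i : ℚ) * (-1)^(_root_.indepNum G - i) := by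
  rw [Pp, Polynomial.finset_sum_coeff]
  refine Finset.sum_congr rfl (fun i hi => ?_)
  have hi' : i ≤ _root_.indepNum G := Nat.lt_succ_iff.mp (Finset.mem_range.mp hi)
  rw [Polynomial.coeff_C_mul]
  congr 1
  have h2 : _root_.indepNum G - i + i - i = _root_.indepNum G - i := by omega
  rw [show _root_.indepNum G = (_root_.indepNum G - i) + i by omega, Polynomial.coeff_X_pow_mul, h2,
    coeff_one_sub_pow]

lemma rm_one_sub_pow (m : ℕ) :
    Polynomial.rootMultiplicity 1 ((1 - Polynomial.X : Polynomial ℚ) ^ m) = m := by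
  rw [one_sub_X_pow_eq]
  have hC : (Polynomial.C ((-1:ℚ)^m)) ≠ 0 := by
    simp [Polynomial.C_eq_zero, pow_ne_zero]
  have hX : ((Polynomial.X - Polynomial.C (1:ℚ)) ^ m) ≠ 0 :=
    pow_ne_zero _ (Polynomial.X_sub_C_ne_zero 1)
  rw [Polynomial.rootMultiplicity_mul (mul_ne_zero hC hX)]
  rw [Polynomial.rootMultiplicity_X_sub_C_pow]
  rw [Polynomial.rootMultiplicity_eq_zero (by
    simp [Polynomial.IsRoot, pow_ne_zero])]
  omega

end ST14

theorem stmt_14 {k : Type*} [Field k] {n : ℕ} (G : SimpleGraph (Fin n))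
    (h : Polynomial ℚ) (d : ℕ) (h1 : h.eval 1 ≠ 0)
    (heq : (1 - PowerSeries.X) ^ d * hilbertSeries k G = (h : PowerSeries ℚ)) :
    h.natDegree = _root_.indepNum G ↔
      (∑ j ∈ Finset.Icc 1 (_root_.indepNum G), (-1 : ℤ) ^ (j - 1) * numIndep G j) ≠ 1 := by
  classical
  set α := _root_.indepNum G with hαdef
  have halpha : α ≤ n := ST14.indepNum_le_n G
  have hser : hilbertSeries k G = ST14.cser G := by
    ext d'
    rw [hilbertSeries, ST14.cser, PowerSeries.coeff_mk, PowerSeries.coeff_mk,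
      ST14.hilbert_eq G k d']
  have hkey : ((ST14.Qp G : Polynomial ℚ) : PowerSeries ℚ)
      = (1 - PowerSeries.X) ^ n * hilbertSeries k G := by
    rw [hser]; exact ST14.key G
  have hps : ((h * (1 - Polynomial.X) ^ n : Polynomial ℚ) : PowerSeries ℚ)
      = (((1 - Polynomial.X) ^ (d + (n - α)) * ST14.Pp G : Polynomial ℚ) : PowerSeries ℚ) := by
    have hQ : ((ST14.Qp G : Polynomial ℚ) : PowerSeries ℚ)
        = (1 - PowerSeries.X) ^ (n - α) * ((ST14.Pp G : Polynomial ℚ) : PowerSeries ℚ) := by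
      rw [ST14.Qp_eq G]
      simp only [Polynomial.coe_mul, Polynomial.coe_pow, Polynomial.coe_sub, Polynomial.coe_one,
        Polynomial.coe_X]
      rfl
    simp only [Polynomial.coe_mul, Polynomial.coe_pow, Polynomial.coe_sub, Polynomial.coe_one,
      Polynomial.coe_X]
    calc (h : PowerSeries ℚ) * (1 - PowerSeries.X) ^ n
        = ((1 - PowerSeries.X) ^ d * hilbertSeries k G) * (1 - PowerSeries.X) ^ n := by
          rw [heq]
      _ = (1 - PowerSeries.X) ^ d * ((1 - PowerSeries.X) ^ n * hilbertSeries k G) := by ring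
      _ = (1 - PowerSeries.X) ^ d * ((1 - PowerSeries.X) ^ (n - α) *
            ((ST14.Pp G : Polynomial ℚ) : PowerSeries ℚ)) := by rw [← hkey, hQ]
      _ = (1 - PowerSeries.X) ^ (d + (n - α)) * ((ST14.Pp G : Polynomial ℚ) : PowerSeries ℚ) := by
          rw [pow_add]; ring
  have hpoly : h * (1 - Polynomial.X) ^ n = (1 - Polynomial.X) ^ (d + (n - α)) * ST14.Pp G :=
    Polynomial.coe_injective ℚ hps
  have hhne : h ≠ 0 := fun h0 => h1 (by simp [h0])
  have honeX : (1 - Polynomial.X : Polynomial ℚ) ≠ 0 := by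
    intro h0
    have := congrArg (Polynomial.eval 0) h0
    simp at this
  have hPr : ¬ (ST14.Pp G).IsRoot 1 := by
    rw [Polynomial.IsRoot, ST14.eval_Pp]
    exact_mod_cast ST14.gI_indepNum_ne_zero G
  have hPne : ST14.Pp G ≠ 0 := fun h0 => hPr (by rw [h0]; exact Polynomial.IsRoot.def.mpr (by simp))
  have hrmL : Polynomial.rootMultiplicity 1 (h * (1 - Polynomial.X) ^ n) = n := by
    rw [Polynomial.rootMultiplicity_mul (mul_ne_zero hhne (pow_ne_zero _ honeX)),
      Polynomial.rootMultiplicity_eq_zero h1, ST14.rm_one_sub_pow n, zero_add]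
  have hrmR : Polynomial.rootMultiplicity 1
      ((1 - Polynomial.X : Polynomial ℚ) ^ (d + (n - α)) * ST14.Pp G) = d + (n - α) := by
    rw [Polynomial.rootMultiplicity_mul (mul_ne_zero (pow_ne_zero _ honeX) hPne),
      ST14.rm_one_sub_pow, Polynomial.rootMultiplicity_eq_zero hPr, add_zero]
  have hd : d = α := by
    rw [hpoly, hrmR] at hrmL
    omega
  have hpoly2 : h * (1 - Polynomial.X) ^ n = ST14.Pp G * (1 - Polynomial.X) ^ n := by
    rw [hpoly, hd, show α + (n - α) = n by omega]
    ring
  have hhP : h = ST14.Pp G := mul_right_cancel₀ (pow_ne_zero _ honeX) hpoly2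
  have hcoeff : h.coeff α
      = (-1)^α * (1 - ((∑ j ∈ Finset.Icc 1 α, (-1:ℤ)^(j-1) * numIndep G j : ℤ) : ℚ)) := by
    rw [hhP, ST14.coeff_Pp]
    rw [show Finset.range (α+1) = insert 0 (Finset.Icc 1 α) by
      ext x
      simp only [Finset.mem_range, Finset.mem_insert, Finset.mem_Icc]
      omega]
    rw [Finset.sum_insert (by simp)]
    rw [ST14.gI_zero]
    have hterm : ∀ i ∈ Finset.Icc 1 α,
        (ST14.gI G i : ℚ) * (-1)^(α - i) = (-1)^α * -((-1)^(i-1) * (ST14.gI G i : ℚ)) := by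
      intro i hi
      rw [Finset.mem_Icc] at hi
      have ht : (-1:ℚ)^(α-i) * (-1)^i = (-1)^α := by
        rw [← pow_add]
        congr 1
        omega
      have hi1 : (-1:ℚ)^i = -(-1)^(i-1) := by
        conv_lhs => rw [show i = (i-1)+1 by omega]
        rw [pow_succ]
        ring
      have h2 : (-1:ℚ)^(i-1) * (-1)^(i-1) = 1 := by
        rw [← pow_add]
        exact Even.neg_one_pow ⟨i-1, rfl⟩
      have hkey2 : (-1:ℚ)^(α-i) = -((-1)^α * (-1)^(i-1)) := by
        calc (-1:ℚ)^(α-i) = (-1)^(α-i) * ((-1)^(i-1) * (-1)^(i-1)) := by rw [h2, mul_one]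
          _ = ((-1)^(α-i) * (-1)^i) * (-(-1)^(i-1)) := by rw [hi1]; ring
          _ = -((-1)^α * (-1)^(i-1)) := by rw [ht]; ring
      rw [hkey2]
      ring
    rw [Finset.sum_congr rfl hterm]
    push_cast
    simp only [ST14.numIndep_eq G]
    have hneg : ∑ x ∈ Finset.Icc 1 α, (-1:ℚ)^α * -((-1)^(x-1) * (ST14.gI G x : ℚ))
        = -∑ x ∈ Finset.Icc 1 α, (-1:ℚ)^α * ((-1)^(x-1) * (ST14.gI G x : ℚ)) := by
      rw [← Finset.sum_neg_distrib]
      exact Finset.sum_congr rfl (fun x _ => by ring)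
    rw [Nat.sub_zero, hneg, one_mul, mul_sub, mul_one, Finset.mul_sum]
    ring
  constructor
  · intro hdeg gq1
    rw [gq1] at hcoeff
    have hc0 : h.coeff α = 0 := by rw [hcoeff]; norm_num
    have hlc : h.leadingCoeff = 0 := by rw [Polynomial.leadingCoeff, hdeg]; exact hc0
    exact hhne (Polynomial.leadingCoeff_eq_zero.mp hlc)
  · intro hne1
    have hc0 : h.coeff α ≠ 0 := by
      rw [hcoeff]
      intro h0
      apply hne1
      rcases mul_eq_zero.mp h0 with hl | hr
      · exact absurd hl (pow_ne_zero _ (by norm_num))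
      · have hq1 : ((∑ j ∈ Finset.Icc 1 α, (-1:ℤ)^(j-1) * numIndep G j : ℤ) : ℚ) = 1 := by
          linarith
        exact_mod_cast hq1
    exact le_antisymm (hhP ▸ ST14.natDegree_Pp_le G) (Polynomial.le_natDegree_of_ne_zero hc0)
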